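/- Let P = [[E,G],[H,F]] be an n×n real matrix such that I − GH and I − HG are invertible, let 𝓕(P) = [[Ê,Ĝ],[Ĥ,F̂]] and write Â₊ = [[Ê,0],[0,0]], Â₌ = [[0,Ĝ],[Ĥ,0]], Â₋ = [[0,0],[0,F̂]]. Then for every integer m ≥ 1: I_m ⊗ A₌ + (I_m ⊗ A₋ + Z_m ⊗ A₊) · (I_m ⊗ (I − A₌))⁻¹ · (Z_m⁻¹ ⊗ A₋ + I_m ⊗ A₊) = Z_m⁻¹ ⊗ Â₋ + I_m ⊗ Â₌ + Z_m ⊗ Â₊. (This is the inductive censoring step showing that censoring the odd-numbered blocks of P⁽²ᵐ⁾ produces (𝓕(P))⁽ᵐ⁾.) -/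

import Mathlib

open Matrix Kronecker

/-- The m×m circulant generator matrix Z_m, with (Z_m)_{ij} = 1 iff j − i ≡ 1 (mod m). -/
def Zc (m : ℕ) : Matrix (Fin m) (Fin m) ℝ :=
  Matrix.of fun i j => if (i.val + 1) % m = j.val then 1 else 0

lemma Zc_mul_transpose (m : ℕ) (hm : 1 ≤ m) : Zc m * (Zc m)ᵀ = 1 := by
  ext i j
  simp only [Matrix.mul_apply, Zc, Matrix.transpose_apply, Matrix.of_apply, Matrix.one_apply]
  have hlt : (i.val + 1) % m < m := Nat.mod_lt _ hm
  rw [Finset.sum_eq_single (⟨(i.val + 1) % m, hlt⟩ : Fin m)]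
  · have hi : (i.val + 1) % m = if i.val + 1 = m then 0 else i.val + 1 := by
      split
      · simp [*]
      · exact Nat.mod_eq_of_lt (by omega)
    have hj : (j.val + 1) % m = if j.val + 1 = m then 0 else j.val + 1 := by
      split
      · simp [*]
      · exact Nat.mod_eq_of_lt (by omega)
    have hi2 := i.isLt; have hj2 := j.isLt
    rw [if_pos rfl, one_mul]
    by_cases h : (j.val + 1) % m = (i.val + 1) % m
    · have h2 := h
      rw [hi, hj] at h2
      rw [if_pos h, if_pos (Fin.ext (by split_ifs at h2 <;> omega))]
    · rw [if_neg h, if_neg (fun hij : i = j => h (by rw [hij]))]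
  · intro b _ hb
    have : ¬ ((i.val + 1) % m = b.val) := fun hc => hb (Fin.ext (show b.val = _ from hc.symm))
    rw [if_neg this, zero_mul]
  · simp

lemma Zc_mul_inv (m : ℕ) (hm : 1 ≤ m) : Zc m * (Zc m)⁻¹ = 1 := by
  have h := Zc_mul_transpose m hm
  have hu : IsUnit (Zc m).det := by
    have : (Zc m).det * (Zc m)ᵀ.det = 1 := by rw [← Matrix.det_mul, h, Matrix.det_one]
    exact IsUnit.of_mul_eq_one _ this
  exact Matrix.mul_nonsing_inv _ hu

/-- The inductive censoring step: with A₊ = [[E,0],[0,0]], A₌ = [[0,G],[H,0]],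
A₋ = [[0,0],[0,F]] and Â₊, Â₌, Â₋ built likewise from the blocks Ê, Ĝ, Ĥ, F̂ of 𝓕(P),
for every m ≥ 1,
I_m ⊗ A₌ + (I_m ⊗ A₋ + Z_m ⊗ A₊)·(I_m ⊗ (I − A₌))⁻¹·(Z_m⁻¹ ⊗ A₋ + I_m ⊗ A₊)
  = Z_m⁻¹ ⊗ Â₋ + I_m ⊗ Â₌ + Z_m ⊗ Â₊. -/
theorem stmt7 (np nm : ℕ) (hnp : 1 ≤ np) (hnm : 1 ≤ nm)
    (E : Matrix (Fin np) (Fin np) ℝ) (G : Matrix (Fin np) (Fin nm) ℝ)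
    (H : Matrix (Fin nm) (Fin np) ℝ) (F : Matrix (Fin nm) (Fin nm) ℝ)
    (hGH : IsUnit (1 - G * H).det) (hHG : IsUnit (1 - H * G).det)
    (m : ℕ) (hm : 1 ≤ m) :
    (1 : Matrix (Fin m) (Fin m) ℝ) ⊗ₖ fromBlocks 0 G H 0
      + ((1 : Matrix (Fin m) (Fin m) ℝ) ⊗ₖ fromBlocks 0 0 0 F + Zc m ⊗ₖ fromBlocks E 0 0 0)
        * ((1 : Matrix (Fin m) (Fin m) ℝ) ⊗ₖ (1 - fromBlocks 0 G H 0))⁻¹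
        * ((Zc m)⁻¹ ⊗ₖ fromBlocks 0 0 0 F + (1 : Matrix (Fin m) (Fin m) ℝ) ⊗ₖ fromBlocks E 0 0 0)
      = (Zc m)⁻¹ ⊗ₖ fromBlocks 0 0 0 (F * (1 - H * G)⁻¹ * F)
        + (1 : Matrix (Fin m) (Fin m) ℝ) ⊗ₖ
            fromBlocks 0 (G + E * (1 - G * H)⁻¹ * (G * F)) (H + F * (1 - H * G)⁻¹ * (H * E)) 0
        + Zc m ⊗ₖ fromBlocks (E * (1 - G * H)⁻¹ * E) 0 0 0 := by

  set N : Matrix (Fin np ⊕ Fin nm) (Fin np ⊕ Fin nm) ℝ :=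
    fromBlocks (1 - G*H)⁻¹ ((1 - G*H)⁻¹ * G) ((1 - H*G)⁻¹ * H) (1 - H*G)⁻¹ with hN
  -- N is a left inverse of (1 - A₌)
  have hNM : N * (1 - fromBlocks 0 G H 0) = 1 := by
    have h1 : (1 - G*H)⁻¹ * (1 - G*H) = 1 := Matrix.nonsing_inv_mul _ hGH
    have h2 : (1 - H*G)⁻¹ * (1 - H*G) = 1 := Matrix.nonsing_inv_mul _ hHG
    rw [mul_sub, mul_one] at h1 h2
    have e1 : (1 : Matrix (Fin np ⊕ Fin nm) (Fin np ⊕ Fin nm) ℝ) - fromBlocks 0 G H 0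
        = fromBlocks 1 (-G) (-H) 1 := by
      ext (i|i) (j|j) <;> simp [Matrix.one_apply, Matrix.sub_apply]
    have hb11 : (1 - G*H)⁻¹ * (1 : Matrix (Fin np) (Fin np) ℝ)
        + (1 - G*H)⁻¹ * G * (-H) = 1 := by
      rw [mul_one, Matrix.mul_neg, Matrix.mul_assoc, ← sub_eq_add_neg, h1]
    have hb12 : (1 - G*H)⁻¹ * (-G) + (1 - G*H)⁻¹ * G * (1 : Matrix (Fin nm) (Fin nm) ℝ) = 0 := by
      simp
    have hb21 : (1 - H*G)⁻¹ * H * (1 : Matrix (Fin np) (Fin np) ℝ)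
        + (1 - H*G)⁻¹ * (-H) = 0 := by simp
    have hb22 : (1 - H*G)⁻¹ * H * (-G) + (1 - H*G)⁻¹ * (1 : Matrix (Fin nm) (Fin nm) ℝ) = 1 := by
      rw [mul_one, Matrix.mul_neg, Matrix.mul_assoc, neg_add_eq_sub, h2]
    rw [hN, e1, Matrix.fromBlocks_multiply, hb11, hb12, hb21, hb22, Matrix.fromBlocks_one]
  -- the Kronecker inverse
  have hK : ((1 : Matrix (Fin m) (Fin m) ℝ) ⊗ₖ (1 - fromBlocks 0 G H 0))⁻¹
      = (1 : Matrix (Fin m) (Fin m) ℝ) ⊗ₖ N := by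
    apply Matrix.inv_eq_left_inv
    rw [← Matrix.mul_kronecker_mul, hNM, mul_one, Matrix.one_kronecker_one]
  have hZ : Zc m * (Zc m)⁻¹ = 1 := Zc_mul_inv m hm
  rw [hK]
  simp only [add_mul, mul_add, ← Matrix.mul_kronecker_mul, one_mul, mul_one, hZ]
  -- now compute the block products
  have c1 : fromBlocks (0:Matrix (Fin np) (Fin np) ℝ) 0 0 F * N * fromBlocks 0 0 0 F
      = fromBlocks 0 0 0 (F * (1 - H*G)⁻¹ * F) := by
    rw [hN, Matrix.fromBlocks_multiply, Matrix.fromBlocks_multiply]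
    simp [Matrix.mul_assoc]
  have c2 : fromBlocks (0:Matrix (Fin np) (Fin np) ℝ) 0 0 F * N * fromBlocks E 0 0 0
      = fromBlocks 0 0 (F * (1 - H*G)⁻¹ * (H * E)) 0 := by
    rw [hN, Matrix.fromBlocks_multiply, Matrix.fromBlocks_multiply]
    simp [Matrix.mul_assoc]
  have c3 : fromBlocks E (0:Matrix (Fin np) (Fin nm) ℝ) 0 0 * N * fromBlocks 0 0 0 F
      = fromBlocks 0 (E * (1 - G*H)⁻¹ * (G * F)) 0 0 := by
    rw [hN, Matrix.fromBlocks_multiply, Matrix.fromBlocks_multiply]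
    simp [Matrix.mul_assoc]
  have c4 : fromBlocks E 0 0 0 * N
        * (fromBlocks E 0 0 0 : Matrix (Fin np ⊕ Fin nm) (Fin np ⊕ Fin nm) ℝ)
      = fromBlocks (E * (1 - G*H)⁻¹ * E) 0 0 0 := by
    rw [hN, Matrix.fromBlocks_multiply, Matrix.fromBlocks_multiply]
    simp [Matrix.mul_assoc]
  rw [c1, c2, c3, c4]
  have split : fromBlocks (0:Matrix (Fin np) (Fin np) ℝ)
        (G + E * (1 - G * H)⁻¹ * (G * F)) (H + F * (1 - H * G)⁻¹ * (H * E)) 0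
      = fromBlocks 0 G H 0 + fromBlocks 0 0 (F * (1 - H*G)⁻¹ * (H * E)) 0
        + fromBlocks 0 (E * (1 - G*H)⁻¹ * (G * F)) 0 0 := by
    ext (i|i) (j|j) <;> simp [Matrix.add_apply]
  rw [split, Matrix.kronecker_add, Matrix.kronecker_add]
  abel
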